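/- arXiv:2312.08484 — 7 statements merged into one kernel-verified Lean document; each statement's English description precedes it below -/
import Mathlib

section
/- Let 0 < α < 1, 0 < γ < 1, let r_CC, r_DD, q_CCC, q_DDD be reals with q_DDD < q_CCC ≤ r_CC/(1−γ), and let (u_t), (v_t) be real sequences satisfying u_{t+1} = (1−α)·u_t + α·(r_DD + γ·v_t) and v_{t+1} = (1−α)·v_t + α·(r_CC + γ·u_{t+1}). If v₀ > q_DDD and u_{t+1} > q_CCC for all t < T, then v_{t+1} > q_DDD for all t < T. -/
/-- the 'stay in lose-shift' lemma: along the coupled Phase-2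
recursion, v stays above q_DDD as long as u stays above q_CCC. -/
theorem stay_in_lose_shift
    (α γ rCC rDD qCCC qDDD : ℝ)
    (hα0 : 0 < α) (hα1 : α < 1) (hγ0 : 0 < γ) (hγ1 : γ < 1)
    (hq1 : qDDD < qCCC) (hq2 : qCCC ≤ rCC / (1 - γ))
    (u v : ℕ → ℝ)
    (hu : ∀ t, u (t + 1) = (1 - α) * u t + α * (rDD + γ * v t))
    (hv : ∀ t, v (t + 1) = (1 - α) * v t + α * (rCC + γ * u (t + 1)))
    (T : ℕ) (hv0 : v 0 > qDDD) (huT : ∀ t < T, u (t + 1) > qCCC) :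
    ∀ t < T, v (t + 1) > qDDD := by
  have hrCC : rCC ≥ (1 - γ) * qCCC := by
    have h1γ : (0:ℝ) < 1 - γ := by linarith
    rw [ge_iff_le, ← le_div_iff₀' h1γ]; exact hq2
  have key : ∀ t, v t > qDDD → u (t + 1) > qCCC → v (t + 1) > qDDD := by
    intro t h1 h2
    rw [hv t]
    have h3 : rCC + γ * u (t + 1) > qDDD := by nlinarith [mul_pos hγ0 (sub_pos.2 h2)]
    nlinarith [mul_pos (sub_pos.2 hα1) (sub_pos.2 h1), mul_pos hα0 (sub_pos.2 h3)]
  intro t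
  induction t with
  | zero => intro h; exact key 0 hv0 (huT 0 h)
  | succ n ih =>
    intro h
    have hn : n < T := Nat.lt_of_succ_lt h
    exact key (n + 1) (ih hn) (huT (n + 1) h)
end

section
/- Let 0 < α < 1 and 0 < γ < 1, and consider the real 2×2 matrix M = [[1−α, −αγ], [−αγ(1−α), 1−α+(αγ)²]]. Then the numbers λ₊ = 1−α+αγ·(αγ/2 + √(1−α+(αγ)²/4)) and λ₋ = 1−α+αγ·(αγ/2 − √(1−α+(αγ)²/4)) are the eigenvalues of M (i.e., det(M − λ₊·I) = 0 and det(M − λ₋·I) = 0, with det M = (1−α)² and trace M = 2(1−α)+(αγ)²), and both satisfy 0 < λ₋ ≤ λ₊ < 1. -/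
/-- eigenvalues of the Phase-2 (lose-shift) dynamics matrix lie
strictly inside (0, 1). -/
theorem lose_shift_matrix_eigenvalues
    (α γ : ℝ) (hα0 : 0 < α) (hα1 : α < 1) (hγ0 : 0 < γ) (hγ1 : γ < 1) :
    let M : Matrix (Fin 2) (Fin 2) ℝ :=
      !![1 - α, -(α * γ); -(α * γ) * (1 - α), 1 - α + (α * γ) ^ 2]
    let lp : ℝ := 1 - α + α * γ * (α * γ / 2 + Real.sqrt (1 - α + (α * γ) ^ 2 / 4))
    let lm : ℝ := 1 - α + α * γ * (α * γ / 2 - Real.sqrt (1 - α + (α * γ) ^ 2 / 4))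
    (M - lp • (1 : Matrix (Fin 2) (Fin 2) ℝ)).det = 0 ∧
    (M - lm • (1 : Matrix (Fin 2) (Fin 2) ℝ)).det = 0 ∧
    M.det = (1 - α) ^ 2 ∧
    M.trace = 2 * (1 - α) + (α * γ) ^ 2 ∧
    0 < lm ∧ lm ≤ lp ∧ lp < 1 := by
  intro M lp lm
  set s : ℝ := Real.sqrt (1 - α + (α * γ) ^ 2 / 4) with hs
  have hs0 : 0 ≤ s := Real.sqrt_nonneg _
  have hs2 : s ^ 2 = 1 - α + (α * γ) ^ 2 / 4 := Real.sq_sqrt (by nlinarith)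
  have hdet : ∀ l : ℝ, (M - l • (1 : Matrix (Fin 2) (Fin 2) ℝ)).det
      = (1 - α - l) * (1 - α + (α * γ) ^ 2 - l) - (α * γ) * ((α * γ) * (1 - α)) := by
    intro l
    have : M - l • (1 : Matrix (Fin 2) (Fin 2) ℝ)
        = !![1 - α - l, -(α * γ); -(α * γ) * (1 - α), 1 - α + (α * γ) ^ 2 - l] := by
      ext i j
      fin_cases i <;> fin_cases j <;>
        simp [M, Matrix.one_apply, Matrix.smul_apply]
    rw [this, Matrix.det_fin_two_of]
    ring
  refine ⟨?_, ?_, ?_, ?_, ?_, ?_, ?_⟩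
  · rw [hdet]; simp only [lp]; nlinarith [hs2]
  · rw [hdet]; simp only [lm]; nlinarith [hs2]
  · rw [show M.det = (1 - α) * (1 - α + (α * γ) ^ 2) - (-(α * γ)) * (-(α * γ) * (1 - α)) from
      Matrix.det_fin_two_of _ _ _ _]
    ring
  · rw [Matrix.trace_fin_two]
    simp [M]
    ring
  · -- 0 < lm
    have ha : 0 ≤ α * γ * s := mul_nonneg (mul_pos hα0 hγ0).le hs0
    have hb : 0 < 1 - α + (α * γ) ^ 2 / 2 := by nlinarith [sq_nonneg (α * γ)]
    have h1 : α * γ * s < 1 - α + (α * γ) ^ 2 / 2 := by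
      by_contra h
      push_neg at h
      nlinarith [hs2, sq_nonneg (1 - α), mul_nonneg ha ha, mul_le_mul h h hb.le ha]
    simp only [lm]
    nlinarith [h1]
  · simp only [lm, lp]; nlinarith [mul_pos hα0 hγ0, hs0]
  · -- lp < 1
    have hγsq : γ ^ 2 < 1 := by nlinarith
    have ha : 0 ≤ α * γ * s := mul_nonneg (mul_pos hα0 hγ0).le hs0
    have hrhs : 0 < α - (α * γ) ^ 2 / 2 := by nlinarith [mul_pos hα0 hα0]
    have h1 : α * γ * s < α - (α * γ) ^ 2 / 2 := by
      by_contra h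
      push_neg at h
      nlinarith [hs2, mul_pos hα0 hα0, mul_le_mul h h hrhs.le ha]
    simp only [lp]; nlinarith [h1]
end

section
/- Let 0 < α < 1, 0 < γ < 1, and r_CC, r_DD ∈ ℝ, and let (u_t), (v_t) be real sequences satisfying u_{t+1} = (1−α)·u_t + α·(r_DD + γ·v_t) and v_{t+1} = (1−α)·v_t + α·(r_CC + γ·u_{t+1}). Then u_t converges to u* = (r_DD + γ·r_CC)/(1−γ²) and v_t converges to v* = (r_CC + γ·r_DD)/(1−γ²) as t → ∞. -/
/-- the coupled Phase-2 (lose-shift) recursion converges to its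
fixed point. -/
theorem lose_shift_recursion_converges
    (α γ rCC rDD : ℝ)
    (hα0 : 0 < α) (hα1 : α < 1) (hγ0 : 0 < γ) (hγ1 : γ < 1)
    (u v : ℕ → ℝ)
    (hu : ∀ t, u (t + 1) = (1 - α) * u t + α * (rDD + γ * v t))
    (hv : ∀ t, v (t + 1) = (1 - α) * v t + α * (rCC + γ * u (t + 1))) :
    Filter.Tendsto u Filter.atTop (nhds ((rDD + γ * rCC) / (1 - γ ^ 2))) ∧
    Filter.Tendsto v Filter.atTop (nhds ((rCC + γ * rDD) / (1 - γ ^ 2))) := by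
  set U := (rDD + γ * rCC) / (1 - γ ^ 2) with hUdef
  set V := (rCC + γ * rDD) / (1 - γ ^ 2) with hVdef
  have hγsq : (1 : ℝ) - γ ^ 2 ≠ 0 := by nlinarith
  have hU : U = rDD + γ * V := by
    rw [hUdef, hVdef]; field_simp; ring
  have hV : V = rCC + γ * U := by
    rw [hUdef, hVdef]; field_simp; ring
  set c : ℝ := 1 - α * (1 - γ) with hcdef
  have hc0 : 0 < c := by nlinarith
  have hc1 : c < 1 := by nlinarith
  set m : ℕ → ℝ := fun t => max |u t - U| |v t - V| with hm
  have hm0 : ∀ t, 0 ≤ m t := fun t => le_trans (abs_nonneg _) (le_max_left _ _)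
  have hαγ : 0 ≤ α * γ := by positivity
  have h1α : 0 ≤ 1 - α := by linarith
  have hustep : ∀ t, |u (t + 1) - U| ≤ c * m t := by
    intro t
    have h : u (t + 1) - U = (1 - α) * (u t - U) + (α * γ) * (v t - V) := by
      rw [hu t, hU]; ring
    calc |u (t + 1) - U| ≤ (1 - α) * |u t - U| + (α * γ) * |v t - V| := by
          rw [h]
          refine (abs_add_le _ _).trans ?_
          rw [abs_mul, abs_mul, abs_of_nonneg h1α, abs_of_nonneg hαγ]
      _ ≤ (1 - α) * m t + (α * γ) * m t := by
          gcongr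
          · exact le_max_left _ _
          · exact le_max_right _ _
      _ = c * m t := by rw [hcdef]; ring
  have hvstep : ∀ t, |v (t + 1) - V| ≤ c * m t := by
    intro t
    have h : v (t + 1) - V = (1 - α) * (v t - V) + (α * γ) * (u (t + 1) - U) := by
      rw [hv t, hV]; ring
    calc |v (t + 1) - V| ≤ (1 - α) * |v t - V| + (α * γ) * |u (t + 1) - U| := by
          rw [h]
          refine (abs_add_le _ _).trans ?_
          rw [abs_mul, abs_mul, abs_of_nonneg h1α, abs_of_nonneg hαγ]
      _ ≤ (1 - α) * m t + (α * γ) * (c * m t) := by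
          gcongr
          · exact le_max_right _ _
          · exact hustep t
      _ ≤ (1 - α) * m t + (α * γ) * (1 * m t) := by
          have h1 : c * m t ≤ 1 * m t := by nlinarith [hm0 t]
          linarith [mul_le_mul_of_nonneg_left h1 hαγ]
      _ = c * m t := by rw [hcdef]; ring
  have hmstep : ∀ t, m (t + 1) ≤ c * m t := fun t =>
    max_le (hustep t) (hvstep t)
  have hgeom : ∀ t, m t ≤ c ^ t * m 0 := by
    intro t
    induction t with
    | zero => simp
    | succ n ih =>
      calc m (n + 1) ≤ c * m n := hmstep n
        _ ≤ c * (c ^ n * m 0) := by gcongr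
        _ = c ^ (n + 1) * m 0 := by ring
  have htend0 : Filter.Tendsto (fun t => c ^ t * m 0) Filter.atTop (nhds 0) := by
    have := tendsto_pow_atTop_nhds_zero_of_lt_one hc0.le hc1
    simpa using this.mul_const (m 0)
  have hmtend : Filter.Tendsto m Filter.atTop (nhds 0) :=
    squeeze_zero hm0 hgeom htend0
  have hutend : Filter.Tendsto (fun t => |u t - U|) Filter.atTop (nhds 0) :=
    squeeze_zero (fun t => abs_nonneg _) (fun t => le_max_left _ _) hmtend
  have hvtend : Filter.Tendsto (fun t => |v t - V|) Filter.atTop (nhds 0) :=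
    squeeze_zero (fun t => abs_nonneg _) (fun t => le_max_right _ _) hmtend
  constructor
  · rw [← tendsto_sub_nhds_zero_iff]
    exact tendsto_zero_iff_abs_tendsto_zero _ |>.mpr hutend
  · rw [← tendsto_sub_nhds_zero_iff]
    exact tendsto_zero_iff_abs_tendsto_zero _ |>.mpr hvtend
end

section
/- Let ε be a real number with 0 ≤ ε ≤ 1/2 and let k ≤ T be natural numbers. Then ∑_{i=0}^{k} (T choose i) · (1−ε)^{2(T−i)} · (2ε−ε²)^{i} ≥ 1 − 2^T · (2ε)^{k+1}. -/
/-- Lemma 3.3(a): lower bound on the probability that non-greedy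
actions occur in at most k of T steps. -/
theorem nongreedy_event_probability
    (ε : ℝ) (hε0 : 0 ≤ ε) (hε1 : ε ≤ 1 / 2) (k T : ℕ) (hkT : k ≤ T) :
    ∑ i ∈ Finset.range (k + 1),
        (T.choose i : ℝ) * (1 - ε) ^ (2 * (T - i)) * (2 * ε - ε ^ 2) ^ i
      ≥ 1 - 2 ^ T * (2 * ε) ^ (k + 1) := by
  set a : ℝ := 2 * ε - ε ^ 2 with ha
  have ha0 : 0 ≤ a := by nlinarith
  have ha2 : a ≤ 2 * ε := by nlinarith
  have h2ε0 : (0:ℝ) ≤ 2 * ε := by linarith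
  have h2ε : 2 * ε ≤ 1 := by linarith
  have hε0' : (0:ℝ) ≤ 1 - ε := by linarith
  have hε1' : 1 - ε ≤ 1 := by linarith
  have hfull : ∑ i ∈ Finset.range (T + 1),
      (T.choose i : ℝ) * (1 - ε) ^ (2 * (T - i)) * a ^ i = 1 := by
    have h := add_pow a ((1 - ε) ^ 2) T
    have h1 : a + (1 - ε) ^ 2 = 1 := by ring
    rw [h1, one_pow] at h
    conv_rhs => rw [h]
    refine Finset.sum_congr rfl fun i _ => ?_
    rw [pow_mul]
    ring
  have hsplit : (∑ i ∈ Finset.range (k + 1),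
        (T.choose i : ℝ) * (1 - ε) ^ (2 * (T - i)) * a ^ i)
      + ∑ i ∈ Finset.Ico (k + 1) (T + 1),
        (T.choose i : ℝ) * (1 - ε) ^ (2 * (T - i)) * a ^ i = 1 := by
    rw [Finset.sum_range_add_sum_Ico _ (by omega : k + 1 ≤ T + 1), hfull]
  have htail : ∑ i ∈ Finset.Ico (k + 1) (T + 1),
      (T.choose i : ℝ) * (1 - ε) ^ (2 * (T - i)) * a ^ i
      ≤ 2 ^ T * (2 * ε) ^ (k + 1) := by
    calc ∑ i ∈ Finset.Ico (k + 1) (T + 1),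
          (T.choose i : ℝ) * (1 - ε) ^ (2 * (T - i)) * a ^ i
        ≤ ∑ i ∈ Finset.Ico (k + 1) (T + 1), (T.choose i : ℝ) * (2 * ε) ^ (k + 1) := by
          refine Finset.sum_le_sum fun i hi => ?_
          rw [Finset.mem_Ico] at hi
          have h1 : (1 - ε) ^ (2 * (T - i)) ≤ 1 := pow_le_one₀ hε0' hε1'
          have h2 : a ^ i ≤ (2 * ε) ^ i := pow_le_pow_left₀ ha0 ha2 i
          have h3 : (2 * ε) ^ i ≤ (2 * ε) ^ (k + 1) :=
            pow_le_pow_of_le_one h2ε0 h2ε hi.1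
          have hc : (0:ℝ) ≤ (T.choose i : ℝ) := Nat.cast_nonneg _
          calc (T.choose i : ℝ) * (1 - ε) ^ (2 * (T - i)) * a ^ i
              ≤ (T.choose i : ℝ) * 1 * (2 * ε) ^ i := by
                apply mul_le_mul
                · exact mul_le_mul_of_nonneg_left h1 hc
                · exact h2
                · exact pow_nonneg ha0 i
                · positivity
            _ = (T.choose i : ℝ) * (2 * ε) ^ i := by ring
            _ ≤ (T.choose i : ℝ) * (2 * ε) ^ (k + 1) :=
                mul_le_mul_of_nonneg_left h3 hc
      _ ≤ ∑ i ∈ Finset.range (T + 1), (T.choose i : ℝ) * (2 * ε) ^ (k + 1) := by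
          refine Finset.sum_le_sum_of_subset_of_nonneg ?_ fun i _ _ => by positivity
          intro i hi
          rw [Finset.mem_Ico] at hi
          exact Finset.mem_range.mpr hi.2
      _ = 2 ^ T * (2 * ε) ^ (k + 1) := by
          rw [← Finset.sum_mul]
          congr 1
          rw [← Nat.cast_sum, Nat.sum_range_choose]
          push_cast; ring
  linarith
end

section
/- Let 0 < α < 1, 0 < γ < 1, set λ = 1 − α(1−γ) (so 0 < λ < 1), let c ≥ 0 and x* ∈ ℝ, let T and m be naturals with m ≤ T, and let (x_t) be a real sequence with x₀ ≥ x*. Suppose there is a set G ⊆ {0,…,T−1} with |{0,…,T−1} \ G| ≤ m such that x_{t+1} − x* = λ·(x_t − x*) for every t ∈ G, and |x_{t+1} − x_t| ≤ c for every t ∈ {0,…,T−1} \ G. Then x_T − x* ≤ λ^{T−m}·(x₀ − x*) + m·c. -/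
/-- Lemma 3.3(d): a sequence contracting with rate λ = 1 − α(1−γ)
except on at most m perturbed steps (each of size ≤ c) satisfies
x_T − x* ≤ λ^{T−m}(x₀ − x*) + m c. -/
theorem contraction_with_perturbations
    (α γ c xs : ℝ) (hα0 : 0 < α) (hα1 : α < 1) (hγ0 : 0 < γ) (hγ1 : γ < 1)
    (hc : 0 ≤ c) (T m : ℕ) (hm : m ≤ T)
    (x : ℕ → ℝ) (hx0 : x 0 ≥ xs)
    (G : Finset ℕ) (hG : G ⊆ Finset.range T)
    (hcard : (Finset.range T \ G).card ≤ m)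
    (hcontract : ∀ t ∈ G, x (t + 1) - xs = (1 - α * (1 - γ)) * (x t - xs))
    (hbd : ∀ t ∈ Finset.range T \ G, |x (t + 1) - x t| ≤ c) :
    x T - xs ≤ (1 - α * (1 - γ)) ^ (T - m) * (x 0 - xs) + m * c := by
  set l : ℝ := 1 - α * (1 - γ) with hl
  have hγ' : 0 < 1 - γ := by linarith
  have hl0 : 0 < l := by nlinarith
  have hl1 : l < 1 := by nlinarith
  have hd : 0 ≤ x 0 - xs := by linarith
  have aux : ∀ n, n ≤ T →
      x n - xs ≤ l ^ ((Finset.range n ∩ G).card) * (x 0 - xs)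
        + ((Finset.range n \ G).card) * c := by
    intro n
    induction n with
    | zero => simp
    | succ k ih =>
      intro hk
      have hk' : k ≤ T := Nat.le_of_succ_le hk
      have IH := ih hk'
      have hrs : Finset.range (k + 1) = insert k (Finset.range k) := Finset.range_add_one
      have hknot : k ∉ Finset.range k := by simp
      by_cases hkG : k ∈ G
      · have hcard1 : (Finset.range (k+1) ∩ G).card = (Finset.range k ∩ G).card + 1 := by
          rw [hrs, Finset.insert_inter_of_mem hkG, Finset.card_insert_of_notMem (by simp)]
        have hcard2 : (Finset.range (k+1) \ G) = (Finset.range k \ G) := by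
          rw [hrs, Finset.insert_sdiff_of_mem _ hkG]
        rw [hcard1, hcard2]
        have h1 := hcontract k hkG
        have hbc : (0:ℝ) ≤ ((Finset.range k \ G).card) * c := by positivity
        have := mul_le_mul_of_nonneg_left IH hl0.le
        calc x (k+1) - xs = l * (x k - xs) := h1
          _ ≤ l * (l ^ ((Finset.range k ∩ G).card) * (x 0 - xs)
              + ((Finset.range k \ G).card) * c) := this
          _ ≤ l ^ ((Finset.range k ∩ G).card + 1) * (x 0 - xs)
              + ((Finset.range k \ G).card) * c := by
            rw [mul_add, pow_succ]
            have : l * (((Finset.range k \ G).card : ℝ) * c)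
                ≤ ((Finset.range k \ G).card : ℝ) * c := by nlinarith
            nlinarith [this]
      · have hcard1 : (Finset.range (k+1) ∩ G) = (Finset.range k ∩ G) := by
          rw [hrs, Finset.insert_inter_of_notMem hkG]
        have hcard2 : (Finset.range (k+1) \ G).card = (Finset.range k \ G).card + 1 := by
          rw [hrs, Finset.insert_sdiff_of_notMem _ hkG,
            Finset.card_insert_of_notMem (by simp)]
        rw [hcard1, hcard2]
        have hkm : k ∈ Finset.range T \ G := by
          simp [Finset.mem_sdiff, hkG]
          omega
        have h2 := hbd k hkm
        have h3 : x (k+1) - x k ≤ c := (abs_le.mp h2).2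
        push_cast
        calc x (k+1) - xs = (x k - xs) + (x (k+1) - x k) := by ring
          _ ≤ (l ^ ((Finset.range k ∩ G).card) * (x 0 - xs)
              + ((Finset.range k \ G).card) * c) + c := by
            exact add_le_add IH h3
          _ = l ^ ((Finset.range k ∩ G).card) * (x 0 - xs)
              + (((Finset.range k \ G).card : ℝ) + 1) * c := by ring
  have hmain := aux T le_rfl
  have hsplit : (Finset.range T ∩ G).card + (Finset.range T \ G).card = T := by
    rw [Finset.card_inter_add_card_sdiff, Finset.card_range]
  have hg : T - m ≤ (Finset.range T ∩ G).card := by omega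
  have hpow : l ^ ((Finset.range T ∩ G).card) ≤ l ^ (T - m) :=
    pow_le_pow_of_le_one hl0.le hl1.le hg
  have h1 : l ^ ((Finset.range T ∩ G).card) * (x 0 - xs) ≤ l ^ (T - m) * (x 0 - xs) :=
    mul_le_mul_of_nonneg_right hpow hd
  have h2 : ((Finset.range T \ G).card : ℝ) * c ≤ (m : ℝ) * c := by
    apply mul_le_mul_of_nonneg_right _ hc
    exact_mod_cast hcard
  linarith
end

section
/- Let 0 < α, 0 < γ < 1 and set λ = 1 − α(1−γ) ∈ (0,1). Let Δ_r > 0, k and T naturals with 2k ≤ T, and reals x*, x₀, y₀ with x₀ > x* and y₀ − x* − 4k·Δ_r·α/(1−γ) > 0. Let x_T, y_T be reals with x_T − x* ≤ λ^{T−2k}·(x₀ − x*) + 2k·Δ_r·α/(1−γ) and y_T ≥ y₀ − 2k·Δ_r·α/(1−γ). If T > 2k + (log(y₀ − x* − 4k·Δ_r·α/(1−γ)) − log(x₀ − x*)) / log(λ), then x_T < y_T. -/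
/-- Lemma 3.3(f): the crossing from always-defect to lose-shift:
with the stated horizon lower bound, x_T < y_T. -/
theorem crossing_to_lose_shift
    (α γ Δr xs x0 y0 xT yT : ℝ)
    (hα : 0 < α) (hγ0 : 0 < γ) (hγ1 : γ < 1)
    (hlam0 : 0 < 1 - α * (1 - γ)) (hlam1 : 1 - α * (1 - γ) < 1)
    (hΔr : 0 < Δr) (k T : ℕ) (hkT : 2 * k ≤ T)
    (hx0 : x0 > xs)
    (hy0 : y0 - xs - 4 * k * Δr * α / (1 - γ) > 0)
    (hxT : xT - xs ≤ (1 - α * (1 - γ)) ^ (T - 2 * k) * (x0 - xs)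
        + 2 * k * Δr * α / (1 - γ))
    (hyT : yT ≥ y0 - 2 * k * Δr * α / (1 - γ))
    (hT : (T : ℝ) > 2 * k +
        (Real.log (y0 - xs - 4 * k * Δr * α / (1 - γ)) - Real.log (x0 - xs)) /
          Real.log (1 - α * (1 - γ))) :
    xT < yT := by
  set lam := 1 - α * (1 - γ) with hlamdef
  set A := x0 - xs with hA
  set B := y0 - xs - 4 * k * Δr * α / (1 - γ) with hB
  have hA0 : 0 < A := by simp [hA]; linarith
  have hloglam : Real.log lam < 0 := Real.log_neg hlam0 hlam1
  have hn : ((T - 2 * k : ℕ) : ℝ) = (T : ℝ) - 2 * k := by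
    push_cast [Nat.cast_sub hkT]; ring
  -- key: lam^(T-2k) * A < B
  have hkey : lam ^ (T - 2 * k) * A < B := by
    have h1 : ((T - 2 * k : ℕ) : ℝ) > (Real.log B - Real.log A) / Real.log lam := by
      rw [hn]; linarith
    have h2 : ((T - 2 * k : ℕ) : ℝ) * Real.log lam < Real.log B - Real.log A := by
      have := (div_lt_iff_of_neg hloglam).mp h1
      linarith
    have h3 : Real.log (lam ^ (T - 2 * k) * A) < Real.log B := by
      rw [Real.log_mul (by positivity) (ne_of_gt hA0), Real.log_pow]
      linarith
    have := Real.exp_lt_exp.mpr h3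
    rwa [Real.exp_log (by positivity), Real.exp_log hy0] at this
  have : xT - xs < B + 2 * k * Δr * α / (1 - γ) := lt_of_le_of_lt hxT (add_lt_add_left hkey _)
  have hBe : B + 2 * k * Δr * α / (1 - γ) = y0 - xs - 2 * k * Δr * α / (1 - γ) := by
    rw [hB]; ring
  linarith [hyT, hBe ▸ this]
end

section
/- Let r_CC, r_CD, r_DC, r_DD be reals with r_DC > r_CC > r_DD > r_CD, and let γ ∈ (0,1) satisfy γ ≥ (r_DC − r_CC)/(r_CC − r_DD). Then the two one-shot-deviation inequalities for the Pavlov policy hold: (i) r_CD + γ·r_DD + γ²·r_CC ≤ r_DD + γ·r_CC + γ²·r_CC, and (ii) r_DC + γ·r_DD + γ²·r_CC ≤ r_CC + γ·r_CC + γ²·r_CC; moreover (ii) holds if and only if γ ≥ (r_DC − r_CC)/(r_CC − r_DD). -/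
/-- the one-shot-deviation inequalities showing Pavlov is a subgame
perfect equilibrium when γ ≥ (r_DC − r_CC)/(r_CC − r_DD). -/
theorem pavlov_one_shot_deviation
    (rCC rCD rDC rDD γ : ℝ)
    (h1 : rDC > rCC) (h2 : rCC > rDD) (h3 : rDD > rCD)
    (hγ0 : 0 < γ) (hγ1 : γ < 1) :
    (γ ≥ (rDC - rCC) / (rCC - rDD) →
      rCD + γ * rDD + γ ^ 2 * rCC ≤ rDD + γ * rCC + γ ^ 2 * rCC ∧
      rDC + γ * rDD + γ ^ 2 * rCC ≤ rCC + γ * rCC + γ ^ 2 * rCC) ∧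
    ((rDC + γ * rDD + γ ^ 2 * rCC ≤ rCC + γ * rCC + γ ^ 2 * rCC) ↔
      γ ≥ (rDC - rCC) / (rCC - rDD)) := by
  have hd : (0:ℝ) < rCC - rDD := by linarith
  have key : (rDC + γ * rDD + γ ^ 2 * rCC ≤ rCC + γ * rCC + γ ^ 2 * rCC) ↔
      γ ≥ (rDC - rCC) / (rCC - rDD) := by
    rw [ge_iff_le, div_le_iff₀ hd]
    constructor <;> intro h <;> nlinarith
  refine ⟨fun h => ⟨?_, key.mpr h⟩, key⟩
  nlinarith
end
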